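/- Let G be a unique product monoid and S = R*G a crossed product with action σ. A nonzero right R-module M is S-prime (i.e., the induced module M*G is a prime S-module) if and only if for all m ∈ M and every ideal B of R with σ(h)(B) ⊆ B for all h ∈ G, whenever m·σ(g)(B) = 0 for some g ∈ G, we have m = 0 or MB = 0. -/
import Mathlib


/-- A unique product monoid. -/
def IsUPM (G : Type*) [Monoid G] : Prop :=
  ∀ X Y : Finset G, X.Nonempty → Y.Nonempty →
    ∃ x ∈ X, ∃ y ∈ Y, ∀ x' ∈ X, ∀ y' ∈ Y, x' * y' = x * y → x' = x ∧ y' = y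

/-- A two-sided ideal of a ring, as a set. -/
def IsIdealSet {R : Type*} [Ring R] (I : Set R) : Prop :=
  (0 : R) ∈ I ∧ (∀ a ∈ I, ∀ b ∈ I, a + b ∈ I) ∧ (∀ a ∈ I, -a ∈ I) ∧
    (∀ a ∈ I, ∀ r : R, r * a ∈ I ∧ a * r ∈ I)

section Stmt18Aux

/-- Left cancellation in a unique product monoid. -/
lemma stmt18_left_cancel {G : Type*} [Monoid G] (hUP : IsUPM G) {a b b' : G}
    (h : a * b = a * b') : b = b' := by
  classical
  by_contra hne
  obtain ⟨x, hx, y, hy, huni⟩ := hUP {a} {b, b'} ⟨a, Finset.mem_singleton_self a⟩ ⟨b, by simp⟩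
  rw [Finset.mem_singleton] at hx
  subst hx
  rcases Finset.mem_insert.mp hy with h1 | h1
  · subst h1
    have h2 := huni x (Finset.mem_singleton_self x) b' (by simp) h.symm
    exact hne h2.2.symm
  · rw [Finset.mem_singleton] at h1
    subst h1
    have h2 := huni x (Finset.mem_singleton_self x) b (by simp) h
    exact hne h2.2

lemma stmt18_op_sum_smul {S : Type*} [Ring S] {N : Type*} [AddCommGroup N] [Module Sᵐᵒᵖ N]
    {α : Type*} (F : Finset α) (φ : α → S) (n : N) :
    MulOpposite.op (∑ a ∈ F, φ a) • n = ∑ a ∈ F, MulOpposite.op (φ a) • n := by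
  induction F using Finset.cons_induction with
  | empty => simp
  | cons a s ha ih => rw [Finset.sum_cons, Finset.sum_cons, MulOpposite.op_add, add_smul, ih]

lemma stmt18_op_mul_smul {S : Type*} [Ring S] {N : Type*} [AddCommGroup N] [Module Sᵐᵒᵖ N]
    (r r' : S) (n : N) :
    MulOpposite.op (r * r') • n = MulOpposite.op r' • (MulOpposite.op r • n) := by
  rw [MulOpposite.op_mul, mul_smul]

lemma stmt18_op_unit_cancel {R : Type*} [Ring R] {M : Type*} [AddCommGroup M] [Module Rᵐᵒᵖ M]
    (A : R) (u : Rˣ) (m : M) (h : MulOpposite.op (A * (u : R)) • m = 0) :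
    MulOpposite.op A • m = 0 := by
  have h2 : MulOpposite.op (A * (u : R) * ((u⁻¹ : Rˣ) : R)) • m = 0 := by
    rw [stmt18_op_mul_smul, h, smul_zero]
  rwa [Units.mul_inv_cancel_right] at h2

variable {G R S M N : Type*} [Monoid G] [Ring R] [Ring S] [AddCommGroup M] [AddCommGroup N]

/-- The canonical map `G →₀ R → S`. -/
def stmt18Phi (ι : R →+* S) (xb : G → S) : (G →₀ R) → S :=
  fun f => f.sum fun g r => ι r * xb g

/-- The canonical map `G →₀ M → N`. -/
def stmt18Psi (j : G → M →+ N) : (G →₀ M) → N :=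
  fun f => f.sum fun g m => j g m

lemma stmt18Phi_def (ι : R →+* S) (xb : G → S) (f : G →₀ R) :
    stmt18Phi ι xb f = ∑ g ∈ f.support, ι (f g) * xb g := rfl

lemma stmt18Psi_def (j : G → M →+ N) (f : G →₀ M) :
    stmt18Psi j f = ∑ g ∈ f.support, j g (f g) := rfl

lemma stmt18Phi_single (ι : R →+* S) (xb : G → S) (g : G) (r : R) :
    stmt18Phi ι xb (Finsupp.single g r) = ι r * xb g :=
  Finsupp.sum_single_index (by simp)

lemma stmt18Psi_single (j : G → M →+ N) (g : G) (m : M) :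
    stmt18Psi j (Finsupp.single g m) = j g m :=
  Finsupp.sum_single_index (by simp)

lemma stmt18Psi_zero (j : G → M →+ N) : stmt18Psi j 0 = 0 :=
  Finsupp.sum_zero_index

lemma stmt18Psi_add (j : G → M →+ N) (f f' : G →₀ M) :
    stmt18Psi j (f + f') = stmt18Psi j f + stmt18Psi j f' :=
  Finsupp.sum_add_index' (by simp) (by simp)

lemma stmt18Psi_sum {α : Type*} (j : G → M →+ N) (F : Finset α) (φ : α → G →₀ M) :
    stmt18Psi j (∑ i ∈ F, φ i) = ∑ i ∈ F, stmt18Psi j (φ i) := by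
  induction F using Finset.cons_induction with
  | empty => simp [stmt18Psi_zero]
  | cons a s ha ih => rw [Finset.sum_cons, Finset.sum_cons, stmt18Psi_add, ih]

/-- The twisted commutation rule `c(g,v)·σ(gv)(r) = σ(g)(σ(v)(r))·c(g,v)`. -/
lemma stmt18_c_comm (ι : R →+* S) (σ : G → R →+* R) (c : G → G → Rˣ) (xb : G → S)
    (hinj : Function.Injective (stmt18Phi ι xb))
    (hxr : ∀ (g : G) (r : R), xb g * ι r = ι (σ g r) * xb g)
    (hxx : ∀ g h : G, xb g * xb h = ι (c g h : R) * xb (g * h))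
    (g v : G) (r : R) :
    (c g v : R) * σ (g * v) r = σ g (σ v r) * (c g v : R) := by
  have key : stmt18Phi ι xb (Finsupp.single (g * v) ((c g v : R) * σ (g * v) r)) =
      stmt18Phi ι xb (Finsupp.single (g * v) (σ g (σ v r) * (c g v : R))) := by
    rw [stmt18Phi_single, stmt18Phi_single, map_mul, map_mul]
    calc ι (c g v : R) * ι (σ (g * v) r) * xb (g * v)
        = ι (c g v : R) * (ι (σ (g * v) r) * xb (g * v)) := by rw [mul_assoc]
      _ = ι (c g v : R) * (xb (g * v) * ι r) := by rw [← hxr]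
      _ = ι (c g v : R) * xb (g * v) * ι r := by rw [mul_assoc]
      _ = xb g * xb v * ι r := by rw [← hxx]
      _ = xb g * (xb v * ι r) := by rw [mul_assoc]
      _ = xb g * (ι (σ v r) * xb v) := by rw [hxr]
      _ = xb g * ι (σ v r) * xb v := by rw [mul_assoc]
      _ = ι (σ g (σ v r)) * xb g * xb v := by rw [hxr]
      _ = ι (σ g (σ v r)) * (xb g * xb v) := by rw [mul_assoc]
      _ = ι (σ g (σ v r)) * (ι (c g v : R) * xb (g * v)) := by rw [hxx]
      _ = ι (σ g (σ v r)) * ι (c g v : R) * xb (g * v) := by rw [mul_assoc]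
  exact Finsupp.single_injective _ (hinj key)

lemma stmt18_c_one_right (ι : R →+* S) (c : G → G → Rˣ) (xb : G → S)
    (hinj : Function.Injective (stmt18Phi ι xb))
    (hxe : xb 1 = 1)
    (hxx : ∀ g h : G, xb g * xb h = ι (c g h : R) * xb (g * h))
    (g : G) : (c g 1 : R) = 1 := by
  have h := hxx g 1
  rw [hxe, mul_one, mul_one] at h
  have key : stmt18Phi ι xb (Finsupp.single g ((c g 1 : R))) =
      stmt18Phi ι xb (Finsupp.single g (1 : R)) := by
    rw [stmt18Phi_single, stmt18Phi_single, map_one, one_mul, ← h]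
  exact Finsupp.single_injective _ (hinj key)

end Stmt18Aux

/-- Let `G` be a unique product monoid and `S = R*G` a crossed product with action
`σ`.  A nonzero right `R`-module `M` is `S`-prime — i.e. the induced module
`N = M*G` is a prime `S`-module — iff for all `m ∈ M` and every `G`-stable ideal
`B` of `R`, whenever `m·σ(g)(B) = 0` for some `g ∈ G`, we have `m = 0` or `MB = 0`. -/
theorem stmt18 {G : Type*} [Monoid G] (hUP : IsUPM G)
    {R S : Type*} [Ring R] [Ring S]
    (ι : R →+* S) (σ : G → R →+* R) (c : G → G → Rˣ) (xb : G → S)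
    (hσe : σ 1 = RingHom.id R) (hxe : xb 1 = 1)
    (hxr : ∀ (g : G) (r : R), xb g * ι r = ι (σ g r) * xb g)
    (hxx : ∀ g h : G, xb g * xb h = ι (c g h : R) * xb (g * h))
    (hfree : Function.Bijective fun f : G →₀ R => f.sum fun g r => ι r * xb g)
    {M : Type*} [AddCommGroup M] [Module Rᵐᵒᵖ M] (hM : ∃ m : M, m ≠ 0)
    {N : Type*} [AddCommGroup N] [Module Sᵐᵒᵖ N] (j : G → M →+ N)
    (hact : ∀ (g h : G) (m : M) (r : R),
      MulOpposite.op (ι r * xb h) • j g m =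
        j (g * h) (MulOpposite.op (σ g r * (c g h : R)) • m))
    (hNfree : Function.Bijective fun f : G →₀ M => f.sum fun g m => j g m) :
    ((∃ n : N, n ≠ 0) ∧ ∀ P : Submodule Sᵐᵒᵖ N, P ≠ ⊥ →
        {s : S | ∀ n ∈ P, MulOpposite.op s • n = 0} =
          {s : S | ∀ n : N, MulOpposite.op s • n = 0}) ↔
    (∀ (m : M) (B : Set R), IsIdealSet B → (∀ h : G, ∀ b ∈ B, σ h b ∈ B) →
      (∃ g : G, ∀ b ∈ B, MulOpposite.op (σ g b) • m = 0) →
      m = 0 ∨ ∀ m' : M, ∀ b ∈ B, MulOpposite.op b • m' = 0) := by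
  classical
  obtain ⟨mw, hmw⟩ := hM
  have hΦbij : Function.Bijective (stmt18Phi ι xb) := hfree
  have hΨbij : Function.Bijective (stmt18Psi j) := hNfree
  have hlcan : ∀ (a b b' : G), a * b = a * b' → b = b' :=
    fun a b b' h => stmt18_left_cancel hUP h
  have hcomp : ∀ (g v : G) (r : R),
      (c g v : R) * σ (g * v) r = σ g (σ v r) * (c g v : R) :=
    stmt18_c_comm ι σ c xb hΦbij.injective hxr hxx
  have hc1 : ∀ g : G, (c g 1 : R) = 1 :=
    stmt18_c_one_right ι c xb hΦbij.injective hxe hxx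
  have hισ1 : ∀ b : R, σ 1 b = b := fun b => by rw [hσe]; rfl
  have hj1inj : ∀ m' : M, j 1 m' = 0 → m' = 0 := by
    intro m' h
    have h2 : Finsupp.single (1 : G) m' = 0 :=
      hΨbij.injective (by rw [stmt18Psi_single, stmt18Psi_zero, h])
    exact Finsupp.single_eq_zero.mp h2
  constructor
  · -- forward direction: prime ⇒ condition
    rintro ⟨-, hann⟩ m B hBid hBst ⟨g, hgk⟩
    by_cases hm : m = 0
    · exact Or.inl hm
    refine Or.inr fun m' b hb => ?_
    have hjgm : j g m ≠ 0 := by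
      intro h
      apply hm
      have h2 : Finsupp.single g m = 0 :=
        hΨbij.injective (by rw [stmt18Psi_single, stmt18Psi_zero, h])
      exact Finsupp.single_eq_zero.mp h2
    set P : Submodule Sᵐᵒᵖ N := Submodule.span Sᵐᵒᵖ {j g m} with hPdef
    have hPbot : P ≠ ⊥ := by
      intro hP0
      apply hjgm
      have hmem : j g m ∈ P := Submodule.mem_span_singleton_self _
      rw [hP0] at hmem
      exact (Submodule.mem_bot Sᵐᵒᵖ).mp hmem
    have hKey : ι b ∈ {s : S | ∀ n ∈ P, MulOpposite.op s • n = 0} := by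
      intro n hn
      obtain ⟨u, hu⟩ := Submodule.mem_span_singleton.mp hn
      rw [← hu, ← MulOpposite.op_unop u, ← stmt18_op_mul_smul]
      obtain ⟨w, hw⟩ := hΦbij.surjective u.unop
      rw [← hw]
      have hdecomp : stmt18Phi ι xb w * ι b =
          ∑ g' ∈ w.support, ι (w g' * σ g' b) * xb g' := by
        rw [stmt18Phi_def, Finset.sum_mul]
        refine Finset.sum_congr rfl fun g' _ => ?_
        rw [mul_assoc, hxr, ← mul_assoc, ← map_mul]
      rw [hdecomp, stmt18_op_sum_smul]
      refine Finset.sum_eq_zero fun g' _ => ?_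
      rw [hact]
      have hbB : w g' * σ g' b ∈ B := (hBid.2.2.2 (σ g' b) (hBst g' b hb) (w g')).1
      rw [show MulOpposite.op (σ g (w g' * σ g' b) * (c g g' : R)) • m = 0 from by
        rw [stmt18_op_mul_smul, hgk _ hbB, smul_zero], map_zero]
    have hKey2 : ι b ∈ {s : S | ∀ n : N, MulOpposite.op s • n = 0} := by
      rw [← hann P hPbot]
      exact hKey
    have h3 := hKey2 (j 1 m')
    rw [show (ι b : S) = ι b * xb 1 from by rw [hxe, mul_one], hact, one_mul, hισ1,
      hc1, mul_one] at h3
    exact hj1inj _ h3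
  · -- converse direction: condition ⇒ prime
    intro hstar
    refine ⟨⟨j 1 mw, fun h => hmw (hj1inj _ h)⟩, ?_⟩
    intro P hP
    ext s
    simp only [Set.mem_setOf_eq]
    constructor
    case mpr => exact fun hs n _ => hs n
    intro hskill
    obtain ⟨n₀', hn₀'P, hn₀'ne⟩ := Submodule.exists_mem_ne_zero_of_ne_bot hP
    have hex : ∃ k : ℕ, ∃ f : G →₀ M,
        stmt18Psi j f ∈ P ∧ stmt18Psi j f ≠ 0 ∧ f.support.card = k := by
      obtain ⟨f, hf⟩ := hΨbij.surjective n₀'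
      exact ⟨f.support.card, f, by rw [hf]; exact hn₀'P, by rw [hf]; exact hn₀'ne, rfl⟩
    obtain ⟨f₀, hf₀P, hf₀ne, hf₀card⟩ := Nat.find_spec hex
    have hmin : ∀ f : G →₀ M, stmt18Psi j f ∈ P → stmt18Psi j f ≠ 0 →
        Nat.find hex ≤ f.support.card :=
      fun f h1 h2 => Nat.find_min' hex ⟨f, h1, h2, rfl⟩
    obtain ⟨t, hts⟩ := hΦbij.surjective s
    have hXne : f₀.support.Nonempty := by
      rw [Finsupp.support_nonempty_iff]
      intro h0
      exact hf₀ne (by rw [h0, stmt18Psi_zero])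
    -- the "all-or-nothing" trick from minimality of the support of f₀
    have htrick : ∀ γ : R, ∀ x' ∈ f₀.support, MulOpposite.op (σ x' γ) • f₀ x' = 0 →
        ∀ x ∈ f₀.support, MulOpposite.op (σ x γ) • f₀ x = 0 := by
      intro γ x' hx' hz x hx
      by_contra hnz
      set f₁ : G →₀ M :=
        ∑ x'' ∈ f₀.support, Finsupp.single x'' (MulOpposite.op (σ x'' γ) • f₀ x'') with hf₁def
      have hf₁app : ∀ z : G, f₁ z = MulOpposite.op (σ z γ) • f₀ z := by
        intro z
        rw [hf₁def, Finsupp.finset_sum_apply]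
        simp only [Finsupp.single_apply]
        rw [Finset.sum_ite_eq' f₀.support z (fun x'' => MulOpposite.op (σ x'' γ) • f₀ x'')]
        split_ifs with hzX
        · rfl
        · rw [Finsupp.notMem_support_iff.mp hzX, smul_zero]
      have hΨf₁ : stmt18Psi j f₁ = MulOpposite.op (ι γ) • stmt18Psi j f₀ := by
        rw [hf₁def, stmt18Psi_sum]
        rw [show stmt18Psi j f₀ = ∑ x'' ∈ f₀.support, j x'' (f₀ x'') from rfl, Finset.smul_sum]
        refine Finset.sum_congr rfl fun x'' _ => ?_
        rw [stmt18Psi_single, show (ι γ : S) = ι γ * xb 1 from by rw [hxe, mul_one], hact,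
          mul_one, hc1, mul_one]
      have hf₁P : stmt18Psi j f₁ ∈ P := by
        rw [hΨf₁]
        exact Submodule.smul_mem P _ hf₀P
      have hf₁ne : stmt18Psi j f₁ ≠ 0 := by
        intro h0
        have hz0 : f₁ = 0 := hΨbij.injective (by rw [h0, stmt18Psi_zero])
        exact hnz (by rw [← hf₁app x, hz0, Finsupp.coe_zero, Pi.zero_apply])
      have hsub : f₁.support ⊂ f₀.support := by
        constructor
        · intro z hz1
          rw [Finsupp.mem_support_iff] at hz1 ⊢
          intro h0
          exact hz1 (by rw [hf₁app, h0, smul_zero])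
        · intro hcontra
          have hmem := hcontra hx'
          rw [Finsupp.mem_support_iff, hf₁app] at hmem
          exact hmem hz
      have hlt : f₁.support.card < Nat.find hex := by
        rw [← hf₀card]
        exact Finset.card_lt_card hsub
      exact absurd (hmin f₁ hf₁P hf₁ne) (not_le.mpr hlt)
    -- the key vanishing statement, obtained via unique products
    have hK : ∀ (v y : G) (a : R), ∀ x ∈ f₀.support,
        MulOpposite.op (σ x (a * σ v (t y))) • f₀ x = 0 := by
      intro v
      by_contra hcon
      push_neg at hcon
      obtain ⟨y0, a0, x0, hx0, hbad0⟩ := hcon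
      have hKout : ∀ y : G, y ∉ t.support →
          ∀ a : R, ∀ x ∈ f₀.support, MulOpposite.op (σ x (a * σ v (t y))) • f₀ x = 0 := by
        intro y hy a x hx
        rw [Finsupp.notMem_support_iff.mp hy, map_zero, mul_zero, map_zero,
          MulOpposite.op_zero, zero_smul]
      set Kbad : Finset G := t.support.filter
        (fun y => ¬ ∀ a : R, ∀ x ∈ f₀.support,
          MulOpposite.op (σ x (a * σ v (t y))) • f₀ x = 0) with hKbaddef
      have hKbadne : Kbad.Nonempty := by
        refine ⟨y0, Finset.mem_filter.mpr ⟨?_, ?_⟩⟩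
        · by_contra hy0
          exact hbad0 (hKout y0 hy0 a0 x0 hx0)
        · intro hKy0
          exact hbad0 (hKy0 a0 x0 hx0)
      obtain ⟨xs, hxs, ws, hws, huni⟩ :=
        hUP f₀.support (Kbad.image (fun y => v * y)) hXne (hKbadne.image _)
      obtain ⟨ys, hysK, hwseq⟩ := Finset.mem_image.mp hws
      have hysbad := (Finset.mem_filter.mp hysK).2
      have hysmem : ys ∈ t.support := (Finset.mem_filter.mp hysK).1
      apply hysbad
      have hmain : ∀ a : R, MulOpposite.op (σ xs (a * σ v (t ys))) • f₀ xs = 0 := by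
        intro a
        set W : G → G → M := fun x y =>
          MulOpposite.op ((σ x a * (c x v : R)) * (σ (x * v) (t y) * (c (x * v) y : R))) • f₀ x
          with hW
        have hValg : ∀ (x y : G),
            (σ x a * (c x v : R)) * (σ (x * v) (t y) * (c (x * v) y : R)) =
            σ x (a * σ v (t y)) * ((c x v : R) * (c (x * v) y : R)) := by
          intro x y
          rw [map_mul]
          calc (σ x a * (c x v : R)) * (σ (x * v) (t y) * (c (x * v) y : R))
              = σ x a * (((c x v : R) * σ (x * v) (t y)) * (c (x * v) y : R)) := by
                simp only [mul_assoc]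
            _ = σ x a * ((σ x (σ v (t y)) * (c x v : R)) * (c (x * v) y : R)) := by
                rw [hcomp]
            _ = σ x a * σ x (σ v (t y)) * ((c x v : R) * (c (x * v) y : R)) := by
                simp only [mul_assoc]
        have hEP : MulOpposite.op s • (MulOpposite.op (ι a * xb v) • stmt18Psi j f₀) = 0 :=
          hskill _ (Submodule.smul_mem P _ hf₀P)
        have hn₁ : MulOpposite.op (ι a * xb v) • stmt18Psi j f₀ =
            ∑ x ∈ f₀.support, j (x * v) (MulOpposite.op (σ x a * (c x v : R)) • f₀ x) := by
          rw [show stmt18Psi j f₀ = ∑ x ∈ f₀.support, j x (f₀ x) from rfl, Finset.smul_sum]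
          exact Finset.sum_congr rfl fun x _ => hact x v (f₀ x) a
        have hE2 : MulOpposite.op s • (MulOpposite.op (ι a * xb v) • stmt18Psi j f₀) =
            ∑ y ∈ t.support, ∑ x ∈ f₀.support, j (x * v * y) (W x y) := by
          rw [hn₁, ← hts]
          rw [show stmt18Phi ι xb t = ∑ y ∈ t.support, ι (t y) * xb y from rfl,
            stmt18_op_sum_smul]
          refine Finset.sum_congr rfl fun y _ => ?_
          rw [Finset.smul_sum]
          refine Finset.sum_congr rfl fun x _ => ?_
          rw [hact (x * v) y (MulOpposite.op (σ x a * (c x v : R)) • f₀ x) (t y),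
            ← stmt18_op_mul_smul]
        have hE : ∑ y ∈ t.support, ∑ x ∈ f₀.support, j (x * v * y) (W x y) = 0 := by
          rw [← hE2]
          exact hEP
        set F : G →₀ M :=
          ∑ y ∈ t.support, ∑ x ∈ f₀.support, Finsupp.single (x * v * y) (W x y) with hFdef
        have hΨF : stmt18Psi j F = 0 := by
          rw [hFdef, stmt18Psi_sum]
          have e1 : ∀ y ∈ t.support,
              stmt18Psi j (∑ x ∈ f₀.support, Finsupp.single (x * v * y) (W x y)) =
              ∑ x ∈ f₀.support, j (x * v * y) (W x y) := by
            intro y _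
            rw [stmt18Psi_sum]
            exact Finset.sum_congr rfl fun x _ => stmt18Psi_single j _ _
          rw [Finset.sum_congr rfl e1]
          exact hE
        have hF0 : F = 0 := hΨbij.injective (by rw [hΨF, stmt18Psi_zero])
        have hFapp : F (xs * (v * ys)) = ∑ y ∈ t.support, ∑ x ∈ f₀.support,
            (if x * v * y = xs * (v * ys) then W x y else 0) := by
          rw [hFdef, Finsupp.finset_sum_apply]
          refine Finset.sum_congr rfl fun y _ => ?_
          rw [Finsupp.finset_sum_apply]
          exact Finset.sum_congr rfl fun x _ => Finsupp.single_apply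
        have hFz : ∑ y ∈ t.support, ∑ x ∈ f₀.support,
            (if x * v * y = xs * (v * ys) then W x y else 0) = 0 := by
          rw [← hFapp, hF0]
          rfl
        have hred : ∑ y ∈ t.support, ∑ x ∈ f₀.support,
            (if x * v * y = xs * (v * ys) then W x y else 0) = W xs ys := by
          rw [Finset.sum_eq_single_of_mem ys hysmem ?_]
          · rw [Finset.sum_eq_single_of_mem xs hxs ?_]
            · rw [if_pos (mul_assoc xs v ys)]
            · intro x hx hxne
              by_cases hc : x * v * ys = xs * (v * ys)
              · exfalso
                have h2 := huni x hx (v * ys) (Finset.mem_image_of_mem _ hysK)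
                  (by rw [← mul_assoc, hc, hwseq])
                exact hxne h2.1
              · rw [if_neg hc]
          · intro y hy hyne
            refine Finset.sum_eq_zero fun x hx => ?_
            by_cases hc : x * v * y = xs * (v * ys)
            · by_cases hKy : ∀ a' : R, ∀ x' ∈ f₀.support,
                MulOpposite.op (σ x' (a' * σ v (t y))) • f₀ x' = 0
              · rw [if_pos hc]
                simp only [hW]
                rw [hValg, stmt18_op_mul_smul, hKy a x hx, smul_zero]
              · exfalso
                have hyKbad : y ∈ Kbad := Finset.mem_filter.mpr ⟨hy, hKy⟩
                have h2 := huni x hx (v * y) (Finset.mem_image_of_mem _ hyKbad)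
                  (by rw [← mul_assoc, hc, hwseq])
                apply hyne
                apply hlcan v y ys
                rw [h2.2]
                exact hwseq.symm
            · rw [if_neg hc]
        have hVz : W xs ys = 0 := hred.symm.trans hFz
        rw [hW] at hVz
        simp only at hVz
        rw [hValg] at hVz
        rw [← Units.val_mul] at hVz
        exact stmt18_op_unit_cancel _ _ _ hVz
      intro a x hx
      exact htrick (a * σ v (t ys)) xs hxs (hmain a) x hx
    -- conclude: every coefficient of s annihilates all of M through every σ g
    obtain ⟨x₀, hx₀⟩ := hXne
    have hfx₀ : f₀ x₀ ≠ 0 := Finsupp.mem_support_iff.mp hx₀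
    have hgood : ∀ (y g : G) (m' : M), MulOpposite.op (σ g (t y)) • m' = 0 := by
      intro y g m'
      set Bs : AddSubgroup R :=
        AddSubgroup.closure {r : R | ∃ (a : R) (v : G) (b : R), r = a * σ v (t y) * b}
        with hBsdef
      have hmem : ∀ (a : R) (v : G) (b : R), a * σ v (t y) * b ∈ Bs :=
        fun a v b => AddSubgroup.subset_closure ⟨a, v, b, rfl⟩
      have hmulL : ∀ r : R, ∀ a ∈ Bs, r * a ∈ Bs := by
        intro r a ha
        refine AddSubgroup.closure_induction ?_ ?_ ?_ ?_ ha
        · rintro x ⟨a', v', b', rfl⟩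
          rw [show r * (a' * σ v' (t y) * b') = (r * a') * σ v' (t y) * b' from by
            simp only [mul_assoc]]
          exact hmem _ _ _
        · rw [mul_zero]; exact Bs.zero_mem
        · intro p q hp hq ihp ihq
          rw [mul_add]; exact Bs.add_mem ihp ihq
        · intro p hp ihp
          rw [mul_neg]; exact Bs.neg_mem ihp
      have hmulR : ∀ r : R, ∀ a ∈ Bs, a * r ∈ Bs := by
        intro r a ha
        refine AddSubgroup.closure_induction ?_ ?_ ?_ ?_ ha
        · rintro x ⟨a', v', b', rfl⟩
          rw [show (a' * σ v' (t y) * b') * r = a' * σ v' (t y) * (b' * r) from by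
            simp only [mul_assoc]]
          exact hmem _ _ _
        · rw [zero_mul]; exact Bs.zero_mem
        · intro p q hp hq ihp ihq
          rw [add_mul]; exact Bs.add_mem ihp ihq
        · intro p hp ihp
          rw [neg_mul]; exact Bs.neg_mem ihp
      have hBid : IsIdealSet (Bs : Set R) := by
        refine ⟨Bs.zero_mem, fun a ha b hb => Bs.add_mem ha hb,
          fun a ha => Bs.neg_mem ha, fun a ha r => ⟨hmulL r a ha, hmulR r a ha⟩⟩
      have hstab : ∀ h : G, ∀ b ∈ (Bs : Set R), σ h b ∈ (Bs : Set R) := by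
        intro h b hb
        refine AddSubgroup.closure_induction ?_ ?_ ?_ ?_ hb
        · rintro x ⟨a', v', b', rfl⟩
          have hσσ : σ h (σ v' (t y)) =
              ((c h v' : R) * σ (h * v') (t y)) * (((c h v')⁻¹ : Rˣ) : R) := by
            rw [hcomp h v' (t y)]
            exact (Units.mul_inv_cancel_right _ _).symm
          rw [map_mul, map_mul, hσσ]
          rw [show σ h a' * (((c h v' : R) * σ (h * v') (t y)) * (((c h v')⁻¹ : Rˣ) : R)) *
              σ h b' = (σ h a' * (c h v' : R)) * σ (h * v') (t y) *
              ((((c h v')⁻¹ : Rˣ) : R) * σ h b') from by simp only [mul_assoc]]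
          exact hmem _ _ _
        · rw [map_zero]; exact Bs.zero_mem
        · intro p q hp hq ihp ihq
          rw [map_add]; exact Bs.add_mem ihp ihq
        · intro p hp ihp
          rw [map_neg]; exact Bs.neg_mem ihp
      have hkil : ∀ b ∈ (Bs : Set R), MulOpposite.op (σ x₀ b) • f₀ x₀ = 0 := by
        intro b hb
        refine AddSubgroup.closure_induction ?_ ?_ ?_ ?_ hb
        · rintro x ⟨a', v', b', rfl⟩
          rw [map_mul, stmt18_op_mul_smul, hK v' y a' x₀ hx₀, smul_zero]
        · rw [map_zero, MulOpposite.op_zero, zero_smul]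
        · intro p q hp hq ihp ihq
          rw [map_add, MulOpposite.op_add, add_smul, ihp, ihq, add_zero]
        · intro p hp ihp
          rw [map_neg, MulOpposite.op_neg, neg_smul, ihp, neg_zero]
      rcases hstar (f₀ x₀) (Bs : Set R) hBid hstab ⟨x₀, hkil⟩ with h0 | hann'
      · exact absurd h0 hfx₀
      · refine hann' m' (σ g (t y)) ?_
        rw [show σ g (t y) = 1 * σ g (t y) * 1 from by rw [one_mul, mul_one]]
        exact hmem 1 g 1
    intro n
    obtain ⟨f', hf'⟩ := hΨbij.surjective n
    rw [← hf', ← hts]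
    rw [show stmt18Phi ι xb t = ∑ y ∈ t.support, ι (t y) * xb y from rfl, stmt18_op_sum_smul]
    refine Finset.sum_eq_zero fun y _ => ?_
    rw [show stmt18Psi j f' = ∑ x ∈ f'.support, j x (f' x) from rfl, Finset.smul_sum]
    refine Finset.sum_eq_zero fun x _ => ?_
    rw [hact x y (f' x) (t y), stmt18_op_mul_smul, hgood y x (f' x), smul_zero, map_zero]
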